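/- Let Λ be a unimodular lattice in ℝ² and let r = (r₁, r₂), s = (s₁, s₂) be a pair of consecutive minimal vectors in Λ with 0 ≤ r₂ < s₂ and such that if r₂ = 0 then r₁s₁ ≤ 0. Then r₁ ≠ 0, and setting x = −s₁/r₁ and y = r₂/s₂, the pair (x, y) belongs to the set U = (0,1)² ∪ ([0,1/2] × {0}) ∪ ({0} × [0,1/2]). -/

import Mathlib

open Matrix
noncomputable section

/-- `SL₂(ℝ)`. -/
abbrev SL2R := Matrix.SpecialLinearGroup (Fin 2) ℝ

/-- The set of points of the unimodular lattice `g ℤ²` in `ℝ²`. -/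
def latticePts (g : SL2R) : Set (Fin 2 → ℝ) :=
  {v | ∃ m : Fin 2 → ℤ, v = (g : Matrix (Fin 2) (Fin 2) ℝ).mulVec (fun i => (m i : ℝ))}

/-- `r` is a minimal vector of the lattice `Λ`: it is a nonzero lattice point, and any
nonzero lattice point `s` with `|s₁| ≤ |r₁|` and `|s₂| ≤ |r₂|` satisfies
`|s₁| = |r₁|` and `|s₂| = |r₂|`. -/
def IsMinimalVector (Λ : Set (Fin 2 → ℝ)) (r : Fin 2 → ℝ) : Prop :=
  r ∈ Λ ∧ r ≠ 0 ∧ ∀ s ∈ Λ, s ≠ 0 → |s 0| ≤ |r 0| → |s 1| ≤ |r 1| →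
    |s 0| = |r 0| ∧ |s 1| = |r 1|

/-- `(r, s)` is a pair of consecutive minimal vectors of `Λ`. -/
def ConsecutiveMinimalVectors (Λ : Set (Fin 2 → ℝ)) (r s : Fin 2 → ℝ) : Prop :=
  IsMinimalVector Λ r ∧ IsMinimalVector Λ s ∧ |r 1| < |s 1| ∧
    ¬∃ w : Fin 2 → ℝ, IsMinimalVector Λ w ∧ |r 1| < |w 1| ∧ |w 1| < |s 1|

lemma lattice_sub (g : SL2R) {v w : Fin 2 → ℝ} (hv : v ∈ latticePts g)
    (hw : w ∈ latticePts g) : v - w ∈ latticePts g := by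
  obtain ⟨m, hm⟩ := hv
  obtain ⟨n, hn⟩ := hw
  refine ⟨m - n, ?_⟩
  have : (fun i => ((m - n) i : ℝ)) = (fun i => (m i : ℝ)) - (fun i => (n i : ℝ)) := by
    funext i; simp [Matrix.sub_apply]
  rw [hm, hn, this, Matrix.mulVec_sub]

lemma lattice_add (g : SL2R) {v w : Fin 2 → ℝ} (hv : v ∈ latticePts g)
    (hw : w ∈ latticePts g) : v + w ∈ latticePts g := by
  obtain ⟨m, hm⟩ := hv
  obtain ⟨n, hn⟩ := hw
  refine ⟨m + n, ?_⟩
  have : (fun i => ((m + n) i : ℝ)) = (fun i => (m i : ℝ)) + (fun i => (n i : ℝ)) := by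
    funext i; simp
  rw [hm, hn, this, Matrix.mulVec_add]

lemma lattice_bounded_finite (g : SL2R) (B : ℝ) :
    {v | v ∈ latticePts g ∧ |v 0| ≤ B ∧ |v 1| ≤ B}.Finite := by
  set A := ((g⁻¹ : SL2R) : Matrix (Fin 2) (Fin 2) ℝ) with hA
  set C : ℝ := (|A 0 0| + |A 0 1| + |A 1 0| + |A 1 1|) * B with hC
  set N : ℤ := max ⌈C⌉ 0 with hN
  have hsub : {v | v ∈ latticePts g ∧ |v 0| ≤ B ∧ |v 1| ≤ B} ⊆
      (fun m : Fin 2 → ℤ => (g : Matrix (Fin 2) (Fin 2) ℝ).mulVec (fun i => (m i : ℝ))) ''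
        (Set.univ.pi fun _ => Set.Icc (-N) N) := by
    rintro v ⟨⟨m, hm⟩, hv0, hv1⟩
    refine ⟨m, ?_, hm.symm⟩
    intro i _
    have hAg : A * (g : Matrix (Fin 2) (Fin 2) ℝ) = 1 := by
      rw [hA, ← Matrix.SpecialLinearGroup.coe_mul, inv_mul_cancel,
        Matrix.SpecialLinearGroup.coe_one]
    have hmv : (fun j => (m j : ℝ)) = A.mulVec v := by
      rw [hm, Matrix.mulVec_mulVec, hAg, Matrix.one_mulVec]
    have hmi : (m i : ℝ) = A i 0 * v 0 + A i 1 * v 1 := by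
      have := congrFun hmv i
      simpa [Matrix.mulVec, dotProduct, Fin.sum_univ_two] using this
    have hB : 0 ≤ B := le_trans (abs_nonneg _) hv0
    have hbound : |(m i : ℝ)| ≤ C := by
      rw [hmi, hC]
      calc |A i 0 * v 0 + A i 1 * v 1| ≤ |A i 0| * |v 0| + |A i 1| * |v 1| := by
            refine (abs_add_le _ _).trans ?_; rw [abs_mul, abs_mul]
        _ ≤ |A i 0| * B + |A i 1| * B := by
            gcongr
        _ ≤ (|A 0 0| + |A 0 1| + |A 1 0| + |A 1 1|) * B := by
            fin_cases i <;> simp <;> nlinarith [abs_nonneg (A 0 0), abs_nonneg (A 0 1),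
              abs_nonneg (A 1 0), abs_nonneg (A 1 1)]
    have : |(m i : ℝ)| ≤ (N : ℝ) := by
      refine hbound.trans ?_
      calc C ≤ (⌈C⌉ : ℝ) := Int.le_ceil C
        _ ≤ (N : ℝ) := by exact_mod_cast le_max_left _ _
    have habs : |m i| ≤ N := by exact_mod_cast this
    exact Set.mem_Icc.mpr (abs_le.mp habs)
  exact (Set.Finite.image _ (Set.Finite.pi fun _ => Set.finite_Icc _ _)).subset hsub

lemma exists_min (g : SL2R) (w : Fin 2 → ℝ) (hw : w ∈ latticePts g) (hw0 : w ≠ 0) :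
    ∃ v, IsMinimalVector (latticePts g) v ∧ |v 0| ≤ |w 0| ∧ |v 1| ≤ |w 1| := by
  set B : ℝ := max (|w 0|) (|w 1|) with hB
  set S := {v | v ∈ latticePts g ∧ v ≠ 0 ∧ |v 0| ≤ |w 0| ∧ |v 1| ≤ |w 1|} with hS
  have hSfin : S.Finite := by
    refine (lattice_bounded_finite g B).subset ?_
    rintro v ⟨hv, _, hv0, hv1⟩
    exact ⟨hv, hv0.trans (le_max_left _ _), hv1.trans (le_max_right _ _)⟩
  have hSne : S.Nonempty := ⟨w, hw, hw0, le_refl _, le_refl _⟩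
  obtain ⟨v, hvS, hmin⟩ := Set.exists_min_image S (fun v => |v 0| + |v 1|) hSfin hSne
  obtain ⟨hvΛ, hv0, hvb0, hvb1⟩ := hvS
  refine ⟨v, ⟨hvΛ, hv0, ?_⟩, hvb0, hvb1⟩
  intro u huΛ hu0 hu0' hu1'
  have huS : u ∈ S := ⟨huΛ, hu0, hu0'.trans hvb0, hu1'.trans hvb1⟩
  have := hmin u huS
  constructor <;> linarith

lemma key (g : SL2R) (r s : Fin 2 → ℝ)
    (h : ConsecutiveMinimalVectors (latticePts g) r s) :
    ∀ w ∈ latticePts g, w ≠ 0 → |w 1| < |s 1| → |r 0| ≤ |w 0| := by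
  intro w hw hw0 hws
  by_contra hlt
  push_neg at hlt
  obtain ⟨v, hv, hv0, hv1⟩ := exists_min g w hw hw0
  rcases le_or_gt (|v 1|) (|r 1|) with hle | hgt
  · have := (h.1.2.2 v hv.1 hv.2.1 (hv0.trans hlt.le) hle).1
    have : |v 0| < |r 0| := hv0.trans_lt hlt
    linarith [(h.1.2.2 v hv.1 hv.2.1 (hv0.trans hlt.le) hle).1]
  · exact h.2.2.2 ⟨v, hv, hgt, hv1.trans_lt hws⟩

/-- Let `(r, s)` be consecutive minimal vectors of a unimodular lattice with
`0 ≤ r₂ < s₂` and `r₁s₁ ≤ 0` whenever `r₂ = 0`. Then `r₁ ≠ 0` and, with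
`x = −s₁/r₁` and `y = r₂/s₂`, the pair `(x,y)` lies in
`U = (0,1)² ∪ ([0,1/2] × {0}) ∪ ({0} × [0,1/2])`. -/
theorem stmt14 (g : SL2R) (r s : Fin 2 → ℝ)
    (h : ConsecutiveMinimalVectors (latticePts g) r s)
    (h1 : 0 ≤ r 1) (h2 : r 1 < s 1) (h3 : r 1 = 0 → r 0 * s 0 ≤ 0) :
    r 0 ≠ 0 ∧
      ∀ x y : ℝ, x = -(s 0) / r 0 → y = r 1 / s 1 →
        (x, y) ∈ (Set.Ioo (0 : ℝ) 1 ×ˢ Set.Ioo (0 : ℝ) 1) ∪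
          (Set.Icc (0 : ℝ) (1 / 2) ×ˢ ({0} : Set ℝ)) ∪
          (({0} : Set ℝ) ×ˢ Set.Icc (0 : ℝ) (1 / 2)) := by
  obtain ⟨hr, hs, hrs, hcons⟩ := h
  have hs1pos : 0 < s 1 := lt_of_le_of_lt h1 h2
  have hr1abs : |r 1| = r 1 := abs_of_nonneg h1
  have hs1abs : |s 1| = s 1 := abs_of_pos hs1pos
  have hr0lt : |s 0| < |r 0| := by
    by_contra hle
    push_neg at hle
    have := (hs.2.2 r hr.1 hr.2.1 hle hrs.le).2
    linarith
  have hr0ne : r 0 ≠ 0 := by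
    intro h0
    rw [h0, abs_zero] at hr0lt
    exact absurd hr0lt (not_lt.mpr (abs_nonneg _))
  have hr0pos : 0 < |r 0| := abs_pos.mpr hr0ne
  refine ⟨hr0ne, ?_⟩
  intro x y hx hy
  rcases eq_or_lt_of_le h1 with hr1 | hr1
  · -- r 1 = 0, y = 0, need x ∈ [0, 1/2]
    have hy0 : y = 0 := by rw [hy, ← hr1]; simp
    have hprod : r 0 * s 0 ≤ 0 := h3 hr1.symm
    have hx0 : 0 ≤ x := by
      rw [hx, div_nonneg_iff]
      rcases lt_or_gt_of_ne hr0ne with h' | h'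
      · have hs0 : 0 ≤ s 0 :=
          le_of_not_gt fun hs' => absurd (mul_pos_of_neg_of_neg h' hs') (not_lt.mpr hprod)
        exact Or.inr ⟨by linarith, h'.le⟩
      · have hs0 : s 0 ≤ 0 :=
          le_of_not_gt fun hs' => absurd (mul_pos h' hs') (not_lt.mpr hprod)
        exact Or.inl ⟨by linarith, h'.le⟩
    have hx12 : x ≤ 1 / 2 := by
      by_contra hgt
      push_neg at hgt
      have hs0big : |r 0| < 2 * |s 0| := by
        have hxabs : x ≤ |x| := le_abs_self x
        have : |x| = |s 0| / |r 0| := by rw [hx, abs_div, abs_neg]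
        rw [this] at hxabs
        have := lt_of_lt_of_le hgt hxabs
        rw [lt_div_iff₀ hr0pos] at this
        linarith
      set t := r + s with ht
      have htΛ : t ∈ latticePts g := lattice_add g hr.1 hs.1
      have ht1 : t 1 = s 1 := by simp [ht, ← hr1]
      have htne : t ≠ 0 := by
        intro h0
        have := congrFun h0 1
        rw [ht1] at this
        simp at this
        linarith
      have ht0 : |t 0| < |s 0| := by
        have ht0' : t 0 = r 0 + s 0 := by simp [ht]
        rw [ht0']
        rcases lt_or_gt_of_ne hr0ne with h' | h'
        · have hs0 : 0 ≤ s 0 :=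
            le_of_not_gt fun hs' => absurd (mul_pos_of_neg_of_neg h' hs') (not_lt.mpr hprod)
          rw [abs_of_neg h'] at hs0big hr0lt
          rw [abs_of_nonneg hs0] at hs0big hr0lt ⊢
          rw [abs_lt]; constructor <;> linarith
        · have hs0 : s 0 ≤ 0 :=
            le_of_not_gt fun hs' => absurd (mul_pos h' hs') (not_lt.mpr hprod)
          rw [abs_of_pos h'] at hs0big hr0lt
          rw [abs_of_nonpos hs0] at hs0big hr0lt ⊢
          rw [abs_lt]; constructor <;> linarith
      have := (hs.2.2 t htΛ htne ht0.le (by rw [ht1])).1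
      linarith
    left; right
    exact ⟨⟨hx0, hx12⟩, by simp [hy0]⟩
  · -- 0 < r 1
    have hy_pos : 0 < y := by rw [hy]; positivity
    have hy_lt : y < 1 := by rw [hy, div_lt_one hs1pos]; exact h2
    rcases eq_or_ne (s 0) 0 with hs0 | hs0
    · -- x = 0, need y ≤ 1/2
      have hx0 : x = 0 := by rw [hx, hs0, neg_zero, zero_div]
      have h2r : 2 * r 1 ≤ s 1 := by
        by_contra hgt
        push_neg at hgt
        set t := s - r with ht
        have htΛ : t ∈ latticePts g := lattice_sub g hs.1 hr.1
        have ht1 : t 1 = s 1 - r 1 := by simp [ht]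
        have ht0 : t 0 = -(r 0) := by simp [ht, hs0]
        have htne : t ≠ 0 := by
          intro h0
          have := congrFun h0 1
          rw [ht1] at this
          simp at this
          linarith
        have hb0 : |t 0| ≤ |r 0| := by rw [ht0, abs_neg]
        have hb1 : |t 1| ≤ |r 1| := by
          rw [ht1, hr1abs, abs_of_pos (by linarith)]
          linarith
        have := (hr.2.2 t htΛ htne hb0 hb1).2
        rw [ht1, hr1abs, abs_of_pos (by linarith : (0:ℝ) < s 1 - r 1)] at this
        linarith
      have hy12 : y ≤ 1 / 2 := by
        rw [hy, div_le_iff₀ hs1pos]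
        linarith
      right
      exact ⟨by simp [hx0], hy_pos.le, hy12⟩
    · -- s 0 ≠ 0; show opposite signs
      have hopp : s 0 * r 0 < 0 := by
        by_contra hge
        push_neg at hge
        set t := s - r with ht
        have htΛ : t ∈ latticePts g := lattice_sub g hs.1 hr.1
        have ht1 : t 1 = s 1 - r 1 := by simp [ht]
        have ht0 : t 0 = s 0 - r 0 := by simp [ht]
        have htne : t ≠ 0 := by
          intro h0
          have := congrFun h0 1
          rw [ht1] at this
          simp at this
          linarith
        have hlt : |t 1| < |s 1| := by
          rw [ht1, hs1abs, abs_of_pos (by linarith : (0:ℝ) < s 1 - r 1)]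
          linarith
        have hkey := key g r s ⟨hr, hs, hrs, hcons⟩ t htΛ htne hlt
        rw [ht0] at hkey
        have habs0 : 0 < |s 0| := abs_pos.mpr hs0
        have : |s 0 - r 0| < |r 0| := by
          rcases lt_or_gt_of_ne hr0ne with h' | h'
          · have hs0' : s 0 ≤ 0 :=
              le_of_not_gt fun hs' => absurd (mul_neg_of_pos_of_neg hs' h') (not_lt.mpr hge)
            have hs0'' : s 0 < 0 := lt_of_le_of_ne hs0' hs0
            rw [abs_of_neg h'] at hr0lt ⊢
            rw [abs_of_neg hs0''] at hr0lt
            rw [abs_lt]; constructor <;> linarith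
          · have hs0' : 0 ≤ s 0 :=
              le_of_not_gt fun hs' => absurd (mul_neg_of_neg_of_pos hs' h') (not_lt.mpr hge)
            have hs0'' : 0 < s 0 := lt_of_le_of_ne hs0' (Ne.symm hs0)
            rw [abs_of_pos h'] at hr0lt ⊢
            rw [abs_of_pos hs0''] at hr0lt
            rw [abs_lt]; constructor <;> linarith
        linarith
      have hx_pos : 0 < x := by
        rw [hx, div_pos_iff]
        rcases lt_or_gt_of_ne hr0ne with h' | h'
        · have : 0 < s 0 := by
            by_contra h0
            push_neg at h0
            have := mul_nonneg (neg_nonneg.mpr h0) (neg_nonneg.mpr h'.le)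
            rw [neg_mul_neg] at this
            linarith
          exact Or.inr ⟨by linarith, h'⟩
        · have : s 0 < 0 :=
            lt_of_not_ge fun hs' => absurd hopp (not_lt.mpr (mul_nonneg hs' h'.le))
          exact Or.inl ⟨by linarith, h'⟩
      have hx_lt : x < 1 := by
        have hxabs : |x| = |s 0| / |r 0| := by rw [hx, abs_div, abs_neg]
        have : |x| < 1 := by rw [hxabs, div_lt_one hr0pos]; exact hr0lt
        exact lt_of_le_of_lt (le_abs_self x) this
      left; left
      exact ⟨⟨hx_pos, hx_lt⟩, hy_pos, hy_lt⟩
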